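/- Let c > 0, ω > 0, T > 0, and let f : [0, T] → ℝ be continuously differentiable with |f(s)| ≤ M₁ and |f'(s)| ≤ M₂ on [0, T]. Let y : [0, T] → ℝ be the twice differentiable solution of y''(t) = f(t) − ω² c² y(t) with y(0) = 0 and y'(0) = 0. Then for every t ∈ [0, T], |y(t)| ≤ (2 M₁ + t M₂)/(ω² c²). In particular, for fixed f, c and bounded t, y(t) = O(ω⁻²) as ω → ∞. -/

import Mathlib

/-- The fast transverse oscillation has amplitude `O(ω⁻²)`.
For `c, ω, T > 0` and `f` continuously differentiable on `[0, T]` with `|f| ≤ M₁`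
and `|f'| ≤ M₂` there, the solution of `y'' = f − ω² c² y`, `y(0) = 0`, `y'(0) = 0`
satisfies `|y(t)| ≤ (2M₁ + t M₂)/(ω² c²)` for every `t ∈ [0, T]`. -/
theorem stmt_16 (c ω T M₁ M₂ : ℝ) (hc : 0 < c) (hω : 0 < ω) (hT : 0 < T)
    (f f' : ℝ → ℝ)
    (hf : ∀ s ∈ Set.Icc (0 : ℝ) T, HasDerivAt f (f' s) s)
    (hM₁ : ∀ s ∈ Set.Icc (0 : ℝ) T, |f s| ≤ M₁)
    (hM₂ : ∀ s ∈ Set.Icc (0 : ℝ) T, |f' s| ≤ M₂)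
    (y y' : ℝ → ℝ)
    (hy : ∀ t ∈ Set.Icc (0 : ℝ) T, HasDerivAt y (y' t) t)
    (hy' : ∀ t ∈ Set.Icc (0 : ℝ) T,
      HasDerivAt y' (f t - ω ^ 2 * c ^ 2 * y t) t)
    (hy0 : y 0 = 0) (hy'0 : y' 0 = 0) :
    ∀ t ∈ Set.Icc (0 : ℝ) T, |y t| ≤ (2 * M₁ + t * M₂) / (ω ^ 2 * c ^ 2) := by
  set k : ℝ := ω ^ 2 * c ^ 2 with hkdef
  have hk : 0 < k := by positivity
  have h0T : (0 : ℝ) ∈ Set.Icc (0 : ℝ) T := ⟨le_rfl, hT.le⟩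
  have hM₁0 : 0 ≤ M₁ := (abs_nonneg _).trans (hM₁ 0 h0T)
  have hM₂0 : 0 ≤ M₂ := (abs_nonneg _).trans (hM₂ 0 h0T)
  -- the energy function
  set E : ℝ → ℝ := fun s => (y' s) ^ 2 + (f s - k * y s) ^ 2 / k with hEdef
  have hE : ∀ s ∈ Set.Icc (0 : ℝ) T,
      HasDerivAt E (2 * (f s - k * y s) * f' s / k) s := by
    intro s hs
    have d1 : HasDerivAt (fun u => (y' u) ^ 2)
        (2 * y' s * (f s - k * y s)) s := by
      have := (hy' s hs).pow 2
      refine this.congr_deriv ?_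
      simp only [hkdef]
      ring
    have d2 : HasDerivAt (fun u => f u - k * y u) (f' s - k * y' s) s :=
      (hf s hs).sub ((hy s hs).const_mul k)
    have d3 : HasDerivAt (fun u => (f u - k * y u) ^ 2 / k)
        (2 * (f s - k * y s) * (f' s - k * y' s) / k) s := by
      have := (d2.pow 2).div_const k
      simpa [pow_one] using this.congr_deriv (by ring)
    have := d1.add d3
    refine this.congr_deriv ?_
    field_simp
    ring
  intro t ht
  -- bound on the energy, for every ε > 0
  have key : ∀ ε > (0 : ℝ), E t ≤ (M₁ + ε + (M₂ + ε) * t) ^ 2 / k := by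
    intro ε hε
    have hboundall : ∀ x ∈ Set.Icc (0 : ℝ) t, E x ≤ (M₁ + ε + (M₂ + ε) * x) ^ 2 / k := by
      refine image_le_of_deriv_right_lt_deriv_boundary
        (f := E) (f' := fun s => 2 * (f s - k * y s) * f' s / k)
        (B := fun s => (M₁ + ε + (M₂ + ε) * s) ^ 2 / k)
        (B' := fun s => 2 * (M₂ + ε) * (M₁ + ε + (M₂ + ε) * s) / k)
        ?_ ?_ ?_ ?_ ?_
      · intro x hx
        have hx' : x ∈ Set.Icc (0 : ℝ) T := ⟨hx.1, hx.2.trans ht.2⟩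
        exact (hE x hx').continuousAt.continuousWithinAt
      · intro x hx
        have hx' : x ∈ Set.Icc (0 : ℝ) T := ⟨hx.1, (hx.2.le).trans ht.2⟩
        exact (hE x hx').hasDerivWithinAt
      · -- initial value
        have hf0 : |f 0| ≤ M₁ := hM₁ 0 h0T
        have : E 0 = (f 0) ^ 2 / k := by
          simp [hEdef, hy0, hy'0]
        rw [this]
        have h1 : (f 0) ^ 2 ≤ (M₁ + ε + (M₂ + ε) * 0) ^ 2 := by
          nlinarith [abs_nonneg (f 0), sq_abs (f 0)]
        exact div_le_div_of_nonneg_right h1 hk.le |>.trans_eq rfl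
      · intro x
        have : HasDerivAt (fun s => (M₁ + ε + (M₂ + ε) * s) ^ 2 / k)
            (2 * (M₂ + ε) * (M₁ + ε + (M₂ + ε) * x) / k) x := by
          have d : HasDerivAt (fun s : ℝ => M₁ + ε + (M₂ + ε) * s) (M₂ + ε) x := by
            simpa using (hasDerivAt_id x).const_mul (M₂ + ε) |>.const_add (M₁ + ε)
          have := (d.pow 2).div_const k
          exact this.congr_deriv (by ring)
        exact this
      · intro x hx hcross
        have hx' : x ∈ Set.Icc (0 : ℝ) T := ⟨hx.1, (hx.2.le).trans ht.2⟩
        set P : ℝ := M₁ + ε + (M₂ + ε) * x with hP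
        have hPpos : 0 < P := by
          have : 0 ≤ (M₂ + ε) * x := mul_nonneg (by linarith) hx.1
          simp only [hP]; linarith
        have hA : (f x - k * y x) ^ 2 ≤ P ^ 2 := by
          have hEx : (f x - k * y x) ^ 2 / k ≤ P ^ 2 / k := by
            have : (y' x) ^ 2 ≥ 0 := sq_nonneg _
            have hEeq : E x = P ^ 2 / k := hcross
            rw [hEdef] at hEeq
            simp only at hEeq
            linarith
          exact (div_le_div_iff_of_pos_right hk).mp hEx
        have habs : |f x - k * y x| ≤ P := by
          nlinarith [abs_nonneg (f x - k * y x), sq_abs (f x - k * y x)]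
        have hf'x : |f' x| ≤ M₂ := hM₂ x hx'
        have h1 : 2 * (f x - k * y x) * f' x ≤ 2 * P * M₂ := by
          have h2 : (f x - k * y x) * f' x ≤ |f x - k * y x| * |f' x| := by
            calc (f x - k * y x) * f' x ≤ |(f x - k * y x) * f' x| := le_abs_self _
              _ = |f x - k * y x| * |f' x| := abs_mul _ _
          have h3 : |f x - k * y x| * |f' x| ≤ P * M₂ :=
            mul_le_mul habs hf'x (abs_nonneg _) hPpos.le
          linarith
        have h4 : 2 * P * M₂ < 2 * (M₂ + ε) * P := by nlinarith
        exact (div_lt_div_iff_of_pos_right hk).mpr (by linarith)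
    exact hboundall t ⟨ht.1, le_rfl⟩
  -- pass to the limit ε → 0⁺
  have hElim : E t ≤ (M₁ + M₂ * t) ^ 2 / k := by
    have hcont : Filter.Tendsto (fun ε : ℝ => (M₁ + ε + (M₂ + ε) * t) ^ 2 / k)
        (nhdsWithin 0 (Set.Ioi 0)) (nhds ((M₁ + M₂ * t) ^ 2 / k)) := by
      have hc2 : Continuous fun ε : ℝ => (M₁ + ε + (M₂ + ε) * t) ^ 2 / k :=
        (((continuous_const.add continuous_id).add
          ((continuous_const.add continuous_id).mul continuous_const)).pow 2).div_const k
      have h2 := hc2.tendsto 0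
      rw [show (M₁ + (0:ℝ) + (M₂ + 0) * t) ^ 2 / k = (M₁ + M₂ * t) ^ 2 / k by ring_nf] at h2
      exact h2.mono_left nhdsWithin_le_nhds
    refine ge_of_tendsto hcont ?_
    filter_upwards [self_mem_nhdsWithin] with ε hε
    exact key ε hε
  -- conclude
  have hPt : 0 ≤ M₁ + M₂ * t := by
    have : 0 ≤ M₂ * t := mul_nonneg hM₂0 ht.1
    linarith
  have hA2 : (f t - k * y t) ^ 2 ≤ (M₁ + M₂ * t) ^ 2 := by
    have h1 : (f t - k * y t) ^ 2 / k ≤ (M₁ + M₂ * t) ^ 2 / k := by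
      have : (y' t) ^ 2 ≥ 0 := sq_nonneg _
      rw [hEdef] at hElim
      simp only at hElim
      linarith
    exact (div_le_div_iff_of_pos_right hk).mp h1
  have habs : |f t - k * y t| ≤ M₁ + M₂ * t := by
    nlinarith [abs_nonneg (f t - k * y t), sq_abs (f t - k * y t)]
  have hft : |f t| ≤ M₁ := hM₁ t ht
  have hky : |k * y t| ≤ 2 * M₁ + t * M₂ := by
    have : k * y t = f t - (f t - k * y t) := by ring
    rw [this]
    calc |f t - (f t - k * y t)| ≤ |f t| + |f t - k * y t| := abs_sub _ _
      _ ≤ M₁ + (M₁ + M₂ * t) := add_le_add hft habs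
      _ = 2 * M₁ + t * M₂ := by ring
  rw [abs_mul, abs_of_pos hk] at hky
  rw [le_div_iff₀ hk]
  linarith
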